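/- The number of compositions of n into parts that are powers of 2, taken modulo 2, equals the Rueppel sequence: comp(n) ≡ 1 (mod 2) if and only if n = 0 or n = 2^k - 1 for some k ≥ 1. -/

import Mathlib

/-- The number of compositions of `n` into powers of `2` (OEIS A023359). -/
noncomputable def compPow2 (n : ℕ) : ℕ :=
  Nat.card {l : List ℕ // (∀ x ∈ l, ∃ k : ℕ, x = 2 ^ k) ∧ l.sum = n}

/-- Auxiliary: the finset of compositions of `n` into powers of `2`. -/
def compF : ℕ → Finset (List ℕ)
  | 0 => {[]}
  | (n+1) =>
    (((Finset.range (n+1)).filter (fun k => 2 ^ k ≤ n + 1)).attach).biUnion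
      (fun k => (compF (n + 1 - 2 ^ k.1)).image (List.cons (2 ^ k.1)))
decreasing_by
  have h := (Finset.mem_filter.mp k.2).2
  have h1 : 1 ≤ 2 ^ k.1 := Nat.one_le_two_pow
  omega

lemma mem_compF (n : ℕ) (l : List ℕ) :
    l ∈ compF n ↔ (∀ x ∈ l, ∃ k : ℕ, x = 2 ^ k) ∧ l.sum = n := by
  induction n using Nat.strong_induction_on generalizing l with
  | _ n ih =>
    match n with
    | 0 =>
      simp only [compF, Finset.mem_singleton]
      constructor
      · rintro rfl; simp
      · rintro ⟨hp, hs⟩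
        cases l with
        | nil => rfl
        | cons a t =>
          obtain ⟨k, hk⟩ := hp a (by simp)
          have : 1 ≤ a := hk ▸ Nat.one_le_two_pow
          simp at hs; omega
    | (m+1) =>
      rw [compF]
      simp only [Finset.mem_biUnion, Finset.mem_attach, Finset.mem_image, true_and,
        Subtype.exists, Finset.mem_filter, Finset.mem_range]
      constructor
      · rintro ⟨k, ⟨hkm, hkle⟩, t, ht, rfl⟩
        rw [ih (m + 1 - 2 ^ k) (by have : 1 ≤ 2 ^ k := Nat.one_le_two_pow; omega)] at ht
        obtain ⟨htp, hts⟩ := ht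
        refine ⟨?_, ?_⟩
        · rintro x hx
          rcases List.mem_cons.mp hx with rfl | hx
          · exact ⟨k, rfl⟩
          · exact htp x hx
        · simp [hts]; omega
      · rintro ⟨hp, hs⟩
        cases l with
        | nil => simp at hs
        | cons a t =>
          obtain ⟨k, rfl⟩ := hp a (by simp)
          have hle : 2 ^ k ≤ m + 1 := by simp at hs; omega
          have hkm : k < m + 1 := lt_of_lt_of_le (Nat.lt_two_pow_self) hle
          refine ⟨k, ⟨hkm, hle⟩, t, ?_, rfl⟩
          rw [ih (m + 1 - 2 ^ k) (by have : 1 ≤ 2 ^ k := Nat.one_le_two_pow; omega)]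
          refine ⟨fun x hx => hp x (List.mem_cons_of_mem _ hx), ?_⟩
          simp at hs; omega

lemma compPow2_eq (n : ℕ) : compPow2 n = (compF n).card := by
  have e : {l : List ℕ // (∀ x ∈ l, ∃ k : ℕ, x = 2 ^ k) ∧ l.sum = n} ≃ {l // l ∈ compF n} :=
    Equiv.subtypeEquivRight (fun l => (mem_compF n l).symm)
  rw [compPow2, Nat.card_eq_of_bijective e e.bijective, Nat.card_eq_fintype_card,
    Fintype.card_coe]

lemma card_compF_succ (n : ℕ) :
    (compF (n+1)).card =
      ∑ k ∈ (Finset.range (n+1)).filter (fun k => 2 ^ k ≤ n + 1),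
        (compF (n + 1 - 2 ^ k)).card := by
  rw [compF, Finset.card_biUnion]
  · rw [← Finset.sum_attach ((Finset.range (n+1)).filter (fun k => 2 ^ k ≤ n + 1))
      (fun k => (compF (n + 1 - 2 ^ k)).card)]
    refine Finset.sum_congr rfl (fun k _ => ?_)
    exact Finset.card_image_of_injective _ (List.cons_injective)
  · intro x _ y _ hxy
    rw [Function.onFun, Finset.disjoint_left]
    rintro l hl hl'
    simp only [Finset.mem_image] at hl hl'
    obtain ⟨t, _, rfl⟩ := hl
    obtain ⟨t', _, he⟩ := hl'
    apply hxy
    have : (2 : ℕ) ^ x.1 = 2 ^ y.1 := by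
      have := (List.cons.injEq _ _ _ _).mp he.symm
      exact this.1
    exact Subtype.ext (Nat.pow_right_injective (le_refl 2) this)

lemma core_pow (k j k' j' : ℕ) (hkj : k ≤ j) (hkj' : k' ≤ j') (hkk : k ≤ k')
    (h : 2 ^ k + 2 ^ j = 2 ^ k' + 2 ^ j') : k = k' ∧ j = j' := by
  have hkj2 : k ≤ j' := le_trans hkk hkj'
  have h1 : (2:ℕ) ^ j = 2 ^ k * 2 ^ (j - k) := by rw [← pow_add]; congr 1; omega
  have h2 : (2:ℕ) ^ k' = 2 ^ k * 2 ^ (k' - k) := by rw [← pow_add]; congr 1; omega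
  have h3 : (2:ℕ) ^ j' = 2 ^ k * 2 ^ (j' - k) := by rw [← pow_add]; congr 1; omega
  have hc : 1 + 2 ^ (j - k) = 2 ^ (k' - k) + 2 ^ (j' - k) := by
    have hp : 0 < (2:ℕ) ^ k := by positivity
    apply Nat.eq_of_mul_eq_mul_left hp
    rw [Nat.mul_add, Nat.mul_add, mul_one, ← h1, ← h2, ← h3, h]
  have hkeq : k = k' := by
    by_contra hne
    have hlt : k < k' := lt_of_le_of_ne hkk hne
    have d1 : 2 ∣ 2 ^ (k' - k) := dvd_pow_self 2 (by omega)
    have d2 : 2 ∣ 2 ^ (j' - k) := dvd_pow_self 2 (by omega)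
    have p1 : 1 ≤ (2:ℕ) ^ (k' - k) := Nat.one_le_two_pow
    have p2 : 1 ≤ (2:ℕ) ^ (j' - k) := Nat.one_le_two_pow
    rcases Nat.eq_or_lt_of_le hkj with rfl | hjk
    · simp at hc; omega
    · have d3 : 2 ∣ 2 ^ (j - k) := dvd_pow_self 2 (by omega)
      omega
  refine ⟨hkeq, ?_⟩
  have : (2:ℕ) ^ j = 2 ^ j' := by rw [hkeq] at h; omega
  exact Nat.pow_right_injective (le_refl 2) this

lemma pair_unique (k j k' j' : ℕ) (h : 2 ^ k + 2 ^ j = 2 ^ k' + 2 ^ j') :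
    (k = k' ∧ j = j') ∨ (k = j' ∧ j = k') := by
  rcases le_total k j with h1 | h1 <;> rcases le_total k' j' with h2 | h2
  · rcases le_total k k' with h3 | h3
    · exact Or.inl (core_pow k j k' j' h1 h2 h3 h)
    · obtain ⟨ha, hb⟩ := core_pow k' j' k j h2 h1 h3 h.symm
      exact Or.inl ⟨ha.symm, hb.symm⟩
  · rcases le_total k j' with h3 | h3
    · obtain ⟨ha, hb⟩ := core_pow k j j' k' h1 h2 h3 (by omega)
      exact Or.inr ⟨ha, hb⟩
    · obtain ⟨ha, hb⟩ := core_pow j' k' k j h2 h1 h3 (by omega)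
      exact Or.inr ⟨ha.symm, hb.symm⟩
  · rcases le_total j k' with h3 | h3
    · obtain ⟨ha, hb⟩ := core_pow j k k' j' h1 h2 h3 (by omega)
      exact Or.inr ⟨hb, ha⟩
    · obtain ⟨ha, hb⟩ := core_pow k' j' j k h2 h1 h3 (by omega)
      exact Or.inr ⟨hb.symm, ha.symm⟩
  · rcases le_total j j' with h3 | h3
    · obtain ⟨ha, hb⟩ := core_pow j k j' k' h1 h2 h3 (by omega)
      exact Or.inl ⟨hb, ha⟩
    · obtain ⟨ha, hb⟩ := core_pow j' k' j k h2 h1 h3 (by omega)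
      exact Or.inl ⟨hb.symm, ha.symm⟩

open Classical in
lemma count_lemma (N : ℕ) (hN : 2 ≤ N) (s : Finset ℕ)
    (hs : ∀ k, k ∈ s ↔ ∃ j, 2 ^ k + 2 ^ j = N) :
    s.card % 2 = if ∃ t, N = 2 ^ t then 1 else 0 := by
  by_cases hp : ∃ t, N = 2 ^ t
  · rw [if_pos hp]
    obtain ⟨t, rfl⟩ := hp
    have ht : 1 ≤ t := by
      rcases Nat.eq_zero_or_pos t with rfl | h; · simp at hN
      · exact h
    have hsum : (2:ℕ) ^ (t-1) + 2 ^ (t-1) = 2 ^ t := by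
      calc (2:ℕ) ^ (t-1) + 2 ^ (t-1) = 2 ^ (t-1) * 2 := by ring
        _ = 2 ^ (t-1+1) := (pow_succ 2 (t-1)).symm
        _ = 2 ^ t := by congr 1; omega
    have : s = {t - 1} := by
      ext k
      rw [hs, Finset.mem_singleton]
      constructor
      · rintro ⟨j, hj⟩
        rcases pair_unique k j (t-1) (t-1) (by omega) with ⟨h1, _⟩ | ⟨h1, _⟩ <;> exact h1
      · rintro rfl; exact ⟨t - 1, hsum⟩
    rw [this]; simp
  · rw [if_neg hp]
    rcases Finset.eq_empty_or_nonempty s with rfl | ⟨k, hk⟩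
    · simp
    · obtain ⟨j, hj⟩ := (hs k).mp hk
      have hne : k ≠ j := by
        rintro rfl
        exact hp ⟨k + 1, by rw [pow_succ]; omega⟩
      have : s = {k, j} := by
        ext k'
        rw [hs]
        simp only [Finset.mem_insert, Finset.mem_singleton]
        constructor
        · rintro ⟨j', hj'⟩
          rcases pair_unique k' j' k j (by omega) with ⟨h1, _⟩ | ⟨h1, _⟩
          · exact Or.inl h1
          · exact Or.inr h1
        · rintro (rfl | rfl)
          · exact ⟨j, hj⟩
          · exact ⟨k, by omega⟩
      rw [this, Finset.card_insert_of_notMem (by simpa using hne), Finset.card_singleton]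

open Classical in
lemma compF_parity (n : ℕ) :
    (compF n).card % 2 = if ∃ k, n + 1 = 2 ^ k then 1 else 0 := by
  induction n using Nat.strong_induction_on with
  | _ n ih =>
    match n with
    | 0 =>
      have : (compF 0).card = 1 := by rw [compF]; rfl
      rw [this, if_pos ⟨0, rfl⟩]
    | (m+1) =>
      rw [card_compF_succ, Finset.sum_nat_mod]
      have hcong : ∀ k ∈ (Finset.range (m+1)).filter (fun k => 2 ^ k ≤ m + 1),
          (compF (m + 1 - 2 ^ k)).card % 2
            = if ∃ j, (m + 1 - 2 ^ k) + 1 = 2 ^ j then 1 else 0 := by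
        intro k hk
        have h2 : 1 ≤ 2 ^ k := Nat.one_le_two_pow
        exact ih (m + 1 - 2 ^ k) (by omega)
      rw [Finset.sum_congr rfl hcong]
      have : (∑ k ∈ (Finset.range (m+1)).filter (fun k => 2 ^ k ≤ m + 1),
          if ∃ j, (m + 1 - 2 ^ k) + 1 = 2 ^ j then 1 else 0)
          = (((Finset.range (m+1)).filter (fun k => 2 ^ k ≤ m + 1)).filter
              (fun k => ∃ j, (m + 1 - 2 ^ k) + 1 = 2 ^ j)).card := by
        rw [Finset.card_filter]
      rw [this]
      have hmem : ∀ k, k ∈ (((Finset.range (m+1)).filter (fun k => 2 ^ k ≤ m + 1)).filter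
              (fun k => ∃ j, (m + 1 - 2 ^ k) + 1 = 2 ^ j))
          ↔ ∃ j, 2 ^ k + 2 ^ j = m + 2 := by
        intro k
        simp only [Finset.mem_filter, Finset.mem_range]
        constructor
        · rintro ⟨⟨hkm, hkle⟩, j, hj⟩
          exact ⟨j, by omega⟩
        · rintro ⟨j, hj⟩
          have h2j : 1 ≤ 2 ^ j := Nat.one_le_two_pow
          have hkle : 2 ^ k ≤ m + 1 := by omega
          have hkm : k < m + 1 := lt_of_lt_of_le (Nat.lt_two_pow_self) hkle
          exact ⟨⟨hkm, hkle⟩, j, by omega⟩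
      rw [count_lemma (m + 2) (by omega) _ hmem]

theorem compPow2_odd_iff (n : ℕ) :
    compPow2 n % 2 = 1 ↔ n = 0 ∨ ∃ k : ℕ, 1 ≤ k ∧ n = 2 ^ k - 1 := by
  rw [compPow2_eq, compF_parity]
  constructor
  · intro h
    by_cases hc : ∃ k, n + 1 = 2 ^ k
    · obtain ⟨k, hk⟩ := hc
      rcases Nat.eq_zero_or_pos k with rfl | hk1
      · left; simpa using hk
      · right; exact ⟨k, hk1, by omega⟩
    · rw [if_neg hc] at h; omega
  · intro h
    have hc : ∃ k, n + 1 = 2 ^ k := by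
      rcases h with rfl | ⟨k, hk1, hk⟩
      · exact ⟨0, rfl⟩
      · have : 1 ≤ 2 ^ k := Nat.one_le_two_pow
        exact ⟨k, by omega⟩
    rw [if_pos hc]
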